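/- Let f : [a,b] → ℝ be C¹ with f' strictly monotone and Γ = {(t,f(t)) : t ∈ [a,b]}. Let γ be a compact connected subset of −Γ containing more than one point. For any ε, δ > 0 there exists a polygonal curve P contained in the open δ-neighborhood of γ such that: (a) each segment of P is tangent to γ and has length < ε; and (b) for every α ∈ ℝ, Φ_α(P ∩ dom Φ_α) ⊇ Φ_α(γ ∩ dom Φ_α), where Φ_α(x₁,x₂) = x₂ + f(α − x₁). -/

import Mathlib

open Real MeasureTheory Set Filter
open scoped Pointwise ENNReal

noncomputable section

instance : Fact (0 < Real.pi) := ⟨Real.pi_pos⟩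

/-- Unoriented direction of a plane vector, as an element of ℝ/πℤ. -/
def dir (v : ℝ × ℝ) : AddCircle Real.pi :=
  if v.1 = 0 then ((Real.pi / 2 : ℝ) : AddCircle Real.pi)
  else ((Real.arctan (v.2 / v.1) : ℝ) : AddCircle Real.pi)

/-- Euclidean length of a plane vector. -/
def elen (v : ℝ × ℝ) : ℝ := Real.sqrt (v.1 ^ 2 + v.2 ^ 2)

/-- Open Euclidean δ-neighborhood of a plane set. -/
def enbhd (δ : ℝ) (S : Set (ℝ × ℝ)) : Set (ℝ × ℝ) := {x | ∃ y ∈ S, elen (x - y) < δ}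

/-- Membership in the closed arc `[θ₁, θ₂]` of ℝ/πℤ (standard orientation). -/
def arcMemCC (θ₁ θ₂ θ : AddCircle Real.pi) : Prop :=
  ∃ t₁ t₂ t : ℝ, (t₁ : AddCircle Real.pi) = θ₁ ∧ (t₂ : AddCircle Real.pi) = θ₂ ∧
    (t : AddCircle Real.pi) = θ ∧ t₁ ≤ t ∧ t ≤ t₂ ∧ t₂ - t₁ < Real.pi

/-- Membership in the open arc `(θ₁, θ₂)` of ℝ/πℤ (standard orientation). -/
def arcMemOO (θ₁ θ₂ θ : AddCircle Real.pi) : Prop :=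
  ∃ t₁ t₂ t : ℝ, (t₁ : AddCircle Real.pi) = θ₁ ∧ (t₂ : AddCircle Real.pi) = θ₂ ∧
    (t : AddCircle Real.pi) = θ ∧ t₁ < t ∧ t < t₂ ∧ t₂ - t₁ < Real.pi

lemma elen_pair_le (x y : ℝ) : elen (x, y) ≤ |x| + |y| := by
  have h1 : (0:ℝ) ≤ |x| + |y| := by positivity
  have h2 : x ^ 2 + y ^ 2 ≤ (|x| + |y|) ^ 2 := by
    nlinarith [sq_abs x, sq_abs y, mul_nonneg (abs_nonneg x) (abs_nonneg y)]
  calc elen (x, y) = Real.sqrt (x ^ 2 + y ^ 2) := rfl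
    _ ≤ Real.sqrt ((|x| + |y|) ^ 2) := Real.sqrt_le_sqrt h2
    _ = |x| + |y| := Real.sqrt_sq h1

lemma seg_graph_mem {A B u₁ u₂ u : ℝ} (h₁ : u₁ ≤ u) (h₂ : u ≤ u₂) :
    ((u, A + B * u) : ℝ × ℝ) ∈ segment ℝ (u₁, A + B * u₁) (u₂, A + B * u₂) := by
  rcases eq_or_lt_of_le (h₁.trans h₂) with h | h
  · have hu : u = u₁ := le_antisymm (h ▸ h₂) h₁
    subst hu
    exact left_mem_segment ℝ _ _
  · rw [segment_eq_image]
    have hne : u₂ - u₁ ≠ 0 := ne_of_gt (by linarith)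
    refine ⟨(u - u₁) / (u₂ - u₁), ⟨div_nonneg (by linarith) (by linarith), by rw [div_le_one (by linarith)]; linarith⟩, ?_⟩
    simp only [Prod.smul_mk, Prod.mk_add_mk, smul_eq_mul, Prod.mk.injEq]
    constructor <;> field_simp <;> ring

lemma graph_of_seg {A B u₁ u₂ : ℝ} (h : u₁ ≤ u₂) {w : ℝ × ℝ}
    (hw : w ∈ segment ℝ (u₁, A + B * u₁) (u₂, A + B * u₂)) :
    ∃ u, u₁ ≤ u ∧ u ≤ u₂ ∧ w = (u, A + B * u) := by
  rw [segment_eq_image] at hw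
  obtain ⟨θ, ⟨h0, h1⟩, rfl⟩ := hw
  refine ⟨(1 - θ) * u₁ + θ * u₂, by nlinarith, by nlinarith, ?_⟩
  simp only [Prod.smul_mk, Prod.mk_add_mk, smul_eq_mul, Prod.mk.injEq]
  exact ⟨by trivial, by ring⟩

lemma exists_partition_index {p mesh T : ℝ} (hm : 0 < mesh) {N : ℕ} (hN : 1 ≤ N)
    (h1 : p ≤ T) (h2 : T ≤ p + N * mesh) :
    ∃ j : ℕ, j + 1 ≤ N ∧ p + j * mesh ≤ T ∧ T ≤ p + (j + 1 : ℕ) * mesh := by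
  set r := (T - p) / mesh with hr
  have hr0 : 0 ≤ r := div_nonneg (by linarith) hm.le
  have hrm : r * mesh = T - p := div_mul_cancel₀ _ hm.ne'
  by_cases hj : ⌊r⌋₊ + 1 ≤ N
  · refine ⟨⌊r⌋₊, hj, ?_, ?_⟩
    · have h3 := Nat.floor_le hr0
      nlinarith
    · have h4 := Nat.lt_floor_add_one r
      push_cast
      nlinarith
  · push_neg at hj
    have hNf : N ≤ ⌊r⌋₊ := by omega
    have hNr : (N : ℝ) ≤ r := le_trans (by exact_mod_cast Nat.cast_le.mpr hNf : (N:ℝ) ≤ (⌊r⌋₊:ℝ)) (Nat.floor_le hr0)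
    have hTq : p + N * mesh ≤ T := by nlinarith
    refine ⟨N - 1, by omega, ?_, ?_⟩
    · have hc : ((N - 1 : ℕ) : ℝ) = (N : ℝ) - 1 := by
        push_cast [Nat.cast_sub hN]; ring
      rw [hc]; nlinarith
    · have hc : ((N - 1 + 1 : ℕ) : ℝ) = (N : ℝ) := by
        have : N - 1 + 1 = N := by omega
        rw [this]
      rw [hc]; linarith

lemma mem_uIcc_zeta {ζ A B C : ℝ} (hζ : ζ = 1 ∨ ζ = -1) (h1 : ζ * A ≤ ζ * B) (h2 : ζ * B ≤ ζ * C) :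
    B ∈ Set.uIcc A C := by
  rw [Set.mem_uIcc]
  rcases hζ with rfl | rfl
  · left; constructor <;> linarith
  · right; constructor <;> linarith

lemma mvt' {φ φ' : ℝ → ℝ} {x y : ℝ} (hxy : x < y)
    (hd : ∀ u ∈ Set.Icc x y, HasDerivAt φ (φ' u) u) :
    ∃ ξ, x < ξ ∧ ξ < y ∧ φ y - φ x = φ' ξ * (y - x) := by
  have hc : ContinuousOn φ (Icc x y) := fun u hu => (hd u hu).continuousAt.continuousWithinAt
  obtain ⟨ξ, hξ, hh⟩ := exists_hasDerivAt_eq_slope φ φ' hxy hc (fun u hu => hd u (Ioo_subset_Icc_self hu))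
  refine ⟨ξ, hξ.1, hξ.2, ?_⟩
  rw [hh, div_mul_cancel₀ _ (ne_of_gt (sub_pos.mpr hxy))]

set_option maxHeartbeats 800000 in
lemma key_lemma (a b : ℝ) (f f' : ℝ → ℝ)
    (hderiv : ∀ t ∈ Set.Icc a b, HasDerivAt f (f' t) t)
    (hcont : ContinuousOn f' (Set.Icc a b))
    (ζ : ℝ) (hζ : ζ = 1 ∨ ζ = -1)
    (hmono : MonotoneOn (fun x => ζ * f' x) (Set.Icc a b))
    (p q : ℝ) (hpq : p < q) (hbp : -b ≤ p) (hqa : q ≤ -a)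
    (γ : Set (ℝ × ℝ)) (hγeq : γ = (fun u => (u, -f (-u))) '' Set.Icc p q)
    (ε δ : ℝ) (hε : 0 < ε) (hδ : 0 < δ) :
    ∃ (n : ℕ) (v : ℕ → ℝ × ℝ),
      (⋃ i ∈ Finset.range n, segment ℝ (v i) (v (i + 1))) ⊆ enbhd δ γ ∧
      (∀ i < n, elen (v (i + 1) - v i) < ε ∧
        ∃ x ∈ γ, ∀ w ∈ segment ℝ (v i) (v (i + 1)),
          w.2 = x.2 + f' (-x.1) * (w.1 - x.1)) ∧
      (∀ α : ℝ,
        (fun x : ℝ × ℝ => x.2 + f (α - x.1)) ''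
            (γ ∩ Set.Icc (α - b) (α - a) ×ˢ (Set.univ : Set ℝ)) ⊆
          (fun x : ℝ × ℝ => x.2 + f (α - x.1)) ''
            ((⋃ i ∈ Finset.range n, segment ℝ (v i) (v (i + 1))) ∩
              Set.Icc (α - b) (α - a) ×ˢ (Set.univ : Set ℝ))) := by
  classical
  have hab : a ≤ b := by linarith
  have hmem : ∀ u, p ≤ u → u ≤ q → (-u) ∈ Set.Icc a b := fun u h1 h2 => ⟨by linarith, by linarith⟩
  have hfc : ContinuousOn f (Set.Icc a b) := fun x hx => (hderiv x hx).continuousAt.continuousWithinAt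
  obtain ⟨M, hM⟩ := isCompact_Icc.exists_bound_of_continuousOn hcont
  have hM' : ∀ x ∈ Set.Icc a b, |f' x| ≤ M := by
    intro x hx; have := hM x hx; rwa [Real.norm_eq_abs] at this
  have hM0 : 0 ≤ M := le_trans (abs_nonneg _) (hM' a ⟨le_refl a, hab⟩)
  -- mesh and partition
  set N : ℕ := ⌈(q - p) * (2 * (1 + M)) / (min ε δ)⌉₊ + 1 with hN
  have hN1 : 1 ≤ N := by omega
  have hNpos : (0:ℝ) < N := by positivity
  clear_value N
  set mesh : ℝ := (q - p) / N with hmeshdef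
  have hmesh0 : 0 < mesh := div_pos (by linarith) hNpos
  have hNmesh : (N : ℝ) * mesh = q - p := by
    rw [hmeshdef]; field_simp
  have hmeshs : 2 * (1 + M) * mesh < min ε δ := by
    have hminpos : 0 < min ε δ := lt_min hε hδ
    have hlt : (q - p) * (2 * (1 + M)) / (min ε δ) < (N : ℝ) := by
      calc (q - p) * (2 * (1 + M)) / (min ε δ) ≤ (⌈(q - p) * (2 * (1 + M)) / (min ε δ)⌉₊ : ℝ) :=
            Nat.le_ceil _
        _ < (N : ℝ) := by rw [hN]; push_cast; linarith
    rw [div_lt_iff₀ hminpos] at hlt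
    rw [hmeshdef, show 2 * (1 + M) * ((q - p) / (N:ℝ)) = (q - p) * (2 * (1 + M)) / N from by ring,
      div_lt_iff₀ hNpos]
    nlinarith
  clear_value mesh
  set t : ℕ → ℝ := fun j => p + j * mesh with htdef
  have ht0 : t 0 = p := by simp [htdef]
  have htN : t N = q := by rw [htdef]; simp only; linarith
  have htmono : ∀ {i j : ℕ}, i ≤ j → t i ≤ t j := by
    intro i j hij
    have : (i:ℝ) ≤ (j:ℝ) := Nat.cast_le.mpr hij
    simp only [htdef]
    nlinarith
  have htsucc : ∀ j : ℕ, t (j+1) = t j + mesh := by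
    intro j; simp only [htdef]; push_cast; ring
  have htmem : ∀ j : ℕ, j ≤ N → t j ∈ Set.Icc p q := fun j hj =>
    ⟨by rw [← ht0]; exact htmono (Nat.zero_le j), by rw [← htN]; exact htmono hj⟩
  clear_value t
  set g : ℝ → ℝ := fun u => -f (-u) with hgdef
  have hg : ∀ u ∈ Set.Icc p q, HasDerivAt g (f' (-u)) u := by
    intro u hu
    have h1 : HasDerivAt (fun x : ℝ => -x) (-1) u := (hasDerivAt_id u).neg
    have h2 : HasDerivAt (fun x : ℝ => f (-x)) (f' (-u) * (-1)) u :=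
      (hderiv (-u) (hmem u hu.1 hu.2)).comp u h1
    have h3 := h2.neg
    rw [hgdef]
    exact h3.congr_deriv (by ring)
  have hΦd : ∀ (α : ℝ) u, p ≤ u → u ≤ q → a ≤ α - u → α - u ≤ b →
      HasDerivAt (fun x => g x + f (α - x)) (f' (-u) - f' (α - u)) u := by
    intro α u h1 h2 h3 h4
    have h5 : HasDerivAt (fun x : ℝ => α - x) (-1) u := by
      simpa using (hasDerivAt_id u).const_sub α
    have h6 : HasDerivAt (fun x : ℝ => f (α - x)) (f' (α - u) * (-1)) u :=
      (hderiv (α - u) ⟨h3, h4⟩).comp u h5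
    have h7 := (hg u ⟨h1, h2⟩).add h6
    exact h7.congr_deriv (by ring)
  have slope_g : ∀ s u, p ≤ s → s < u → u ≤ q →
      ∃ ξ, s < ξ ∧ ξ < u ∧ g u - g s = f' (-ξ) * (u - s) := by
    intro s u h1 h2 h3
    exact mvt' h2 (fun x hx => hg x ⟨le_trans h1 hx.1, le_trans hx.2 h3⟩)
  clear_value g
  set ℓ : ℕ → ℝ → ℝ := fun k u => (g (t k) - f' (-(t k)) * t k) + f' (-(t k)) * u with hℓdef
  clear_value ℓ
  have hℓt : ∀ k, ℓ k (t k) = g (t k) := by intro k; simp only [hℓdef]; ring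
  have hmemk : ∀ k : ℕ, k ≤ N → (-(t k)) ∈ Set.Icc a b := fun k hk =>
    hmem _ (htmem k hk).1 (htmem k hk).2
  have tangent : ∀ k : ℕ, k ≤ N → ∀ u, p ≤ u → u ≤ q → ζ * g u ≤ ζ * (ℓ k u) := by
    intro k hk u h1 h2
    have hsk := htmem k hk
    rcases lt_trichotomy u (t k) with h | h | h
    · obtain ⟨ξ, hξ1, hξ2, heq⟩ := slope_g u (t k) h1 h hsk.2
      have hξm : (-ξ) ∈ Set.Icc a b := hmem ξ (by linarith) (by linarith [hsk.2])
      have hm1 : ζ * f' (-(t k)) ≤ ζ * f' (-ξ) := hmono (hmemk k hk) hξm (by linarith)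
      have heq' : ζ * g (t k) - ζ * g u = ζ * f' (-ξ) * (t k - u) := by linear_combination ζ * heq
      have hkey : 0 ≤ (ζ * f' (-ξ) - ζ * f' (-(t k))) * (t k - u) :=
        mul_nonneg (by linarith) (by linarith)
      simp only [hℓdef]
      nlinarith
    · rw [h, hℓt]
    · obtain ⟨ξ, hξ1, hξ2, heq⟩ := slope_g (t k) u hsk.1 h h2
      have hξm : (-ξ) ∈ Set.Icc a b := hmem ξ (by linarith [hsk.1]) (by linarith)
      have hm1 : ζ * f' (-ξ) ≤ ζ * f' (-(t k)) := hmono hξm (hmemk k hk) (by linarith)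
      have heq' : ζ * g u - ζ * g (t k) = ζ * f' (-ξ) * (u - t k) := by linear_combination ζ * heq
      have hkey : 0 ≤ (ζ * f' (-(t k)) - ζ * f' (-ξ)) * (u - t k) :=
        mul_nonneg (by linarith) (by linarith)
      simp only [hℓdef]
      nlinarith
  have hmonoh : ∀ α : ℝ, α ≤ 0 → ∀ t₁ t₂, p ≤ t₁ → t₂ ≤ q → t₁ ≤ t₂ → a ≤ α - t₂ → α - t₁ ≤ b →
      ζ * (g t₁ + f (α - t₁)) ≤ ζ * (g t₂ + f (α - t₂)) := by
    intro α hα t₁ t₂ h1 h2 h12 h3 h4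
    rcases eq_or_lt_of_le h12 with rfl | hlt
    · exact le_rfl
    · obtain ⟨ξ, hξ1, hξ2, heq⟩ := mvt' (φ := fun u => g u + f (α - u))
        (φ' := fun u => f' (-u) - f' (α - u)) hlt
        (fun u hu => hΦd α u (le_trans h1 hu.1) (le_trans hu.2 h2)
          (by linarith [hu.2]) (by linarith [hu.1]))
      have hsign : ζ * f' (α - ξ) ≤ ζ * f' (-ξ) := by
        exact hmono ⟨by linarith, by linarith⟩ ⟨by linarith, by linarith⟩ (by linarith)
      have heq' : ζ * (g t₂ + f (α - t₂)) - ζ * (g t₁ + f (α - t₁))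
          = (ζ * f' (-ξ) - ζ * f' (α - ξ)) * (t₂ - t₁) := by linear_combination ζ * heq
      exact sub_nonneg.mp (le_of_le_of_eq (mul_nonneg (sub_nonneg.mpr hsign)
        (le_of_lt (sub_pos.mpr hlt))) heq'.symm)
  have hantih : ∀ α : ℝ, 0 ≤ α → ∀ t₁ t₂, p ≤ t₁ → t₂ ≤ q → t₁ ≤ t₂ → a ≤ α - t₂ → α - t₁ ≤ b →
      ζ * (g t₂ + f (α - t₂)) ≤ ζ * (g t₁ + f (α - t₁)) := by
    intro α hα t₁ t₂ h1 h2 h12 h3 h4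
    rcases eq_or_lt_of_le h12 with rfl | hlt
    · exact le_rfl
    · obtain ⟨ξ, hξ1, hξ2, heq⟩ := mvt' (φ := fun u => g u + f (α - u))
        (φ' := fun u => f' (-u) - f' (α - u)) hlt
        (fun u hu => hΦd α u (le_trans h1 hu.1) (le_trans hu.2 h2)
          (by linarith [hu.2]) (by linarith [hu.1]))
      have hsign : ζ * f' (-ξ) ≤ ζ * f' (α - ξ) := by
        exact hmono ⟨by linarith, by linarith⟩ ⟨by linarith, by linarith⟩ (by linarith)
      have heq' : ζ * (g t₂ + f (α - t₂)) - ζ * (g t₁ + f (α - t₁))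
          = (ζ * f' (-ξ) - ζ * f' (α - ξ)) * (t₂ - t₁) := by linear_combination ζ * heq
      exact sub_nonpos.mp (le_of_eq_of_le heq' (mul_nonpos_of_nonpos_of_nonneg
        (sub_nonpos.mpr hsign) (le_of_lt (sub_pos.mpr hlt))))
  -- intersection points of consecutive tangent lines
  have hcex : ∀ j : ℕ, ∃ x, t (j-1) ≤ x ∧ x ≤ t j ∧ (1 ≤ j → j ≤ N → ℓ (j-1) x = ℓ j x) := by
    intro j
    by_cases hj : 1 ≤ j ∧ j ≤ N
    · obtain ⟨hj1, hjN⟩ := hj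
      have hle : t (j-1) ≤ t j := htmono (Nat.sub_le j 1)
      have hcontD : ContinuousOn (fun u => ζ * (ℓ (j-1) u - ℓ j u)) (Set.Icc (t (j-1)) (t j)) := by
        apply Continuous.continuousOn
        rw [hℓdef]
        fun_prop
      have hmem1 := htmem (j-1) (le_trans (Nat.sub_le j 1) hjN)
      have hmem2 := htmem j hjN
      have hD1 : ζ * (ℓ (j-1) (t (j-1)) - ℓ j (t (j-1))) ≤ 0 := by
        rw [hℓt]
        have := tangent j hjN (t (j-1)) hmem1.1 hmem1.2
        have e : ζ * (g (t (j-1)) - ℓ j (t (j-1))) = ζ * g (t (j-1)) - ζ * ℓ j (t (j-1)) := by ring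
        rw [e]
        linarith
      have hD2 : 0 ≤ ζ * (ℓ (j-1) (t j) - ℓ j (t j)) := by
        rw [hℓt]
        have := tangent (j-1) (le_trans (Nat.sub_le j 1) hjN) (t j) hmem2.1 hmem2.2
        have e : ζ * (ℓ (j-1) (t j) - g (t j)) = ζ * ℓ (j-1) (t j) - ζ * g (t j) := by ring
        rw [e]
        linarith
      obtain ⟨x, hx, hDx⟩ := intermediate_value_Icc hle hcontD ⟨hD1, hD2⟩
      refine ⟨x, hx.1, hx.2, fun _ _ => ?_⟩
      have hζ0 : ζ ≠ 0 := by rcases hζ with rfl | rfl <;> norm_num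
      rcases mul_eq_zero.mp hDx with h | h
      · exact absurd h hζ0
      · linarith [sub_eq_zero.mp h]
    · refine ⟨t j, htmono (Nat.sub_le j 1), le_refl _, fun h1 h2 => absurd ⟨h1, h2⟩ hj⟩
  set c : ℕ → ℝ := fun j => if j ≤ N then (hcex j).choose else q with hcdef
  have hcspec : ∀ j : ℕ, j ≤ N → t (j-1) ≤ c j ∧ c j ≤ t j ∧ (1 ≤ j → ℓ (j-1) (c j) = ℓ j (c j)) := by
    intro j hj
    rw [hcdef]
    simp only [if_pos hj]
    obtain ⟨h1, h2, h3⟩ := (hcex j).choose_spec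
    exact ⟨h1, h2, fun h => h3 h hj⟩
  have hctop : ∀ j : ℕ, N < j → c j = q := by
    intro j hj
    rw [hcdef]
    simp only [if_neg (by omega : ¬ j ≤ N)]
  clear_value c
  have hcub : ∀ j : ℕ, j ≤ N + 1 → c j ≤ t j := by
    intro j hj
    rcases Nat.lt_or_ge N j with h | h
    · have hjN : j = N + 1 := by omega
      rw [hctop j h, hjN, ← htN]
      exact htmono (by omega)
    · exact (hcspec j h).2.1
  have hclb : ∀ j : ℕ, j ≤ N + 1 → t j - mesh ≤ c j := by
    intro j hj
    rcases Nat.lt_or_ge N j with h | h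
    · have hjN : j = N + 1 := by omega
      rw [hctop j h, hjN, htsucc N, htN]
      linarith
    · have h1 := (hcspec j h).1
      have h2 : t j - mesh ≤ t (j-1) := by
        rcases Nat.eq_zero_or_pos j with rfl | hj0
        · simp only [Nat.zero_sub]
          linarith
        · have : (j - 1) + 1 = j := by omega
          have := htsucc (j-1)
          rw [‹(j-1)+1 = j›] at this
          linarith
      linarith
  have hclow2 : ∀ j : ℕ, j ≤ N → t j ≤ c (j+1) := by
    intro j hj
    rcases Nat.lt_or_ge N (j+1) with h | h
    · have : j = N := by omega
      rw [hctop (j+1) h, this, htN]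
    · have h1 := (hcspec (j+1) h).1
      simpa using h1
  have hceq2 : ∀ j : ℕ, j + 1 ≤ N → ℓ j (c (j+1)) = ℓ (j+1) (c (j+1)) := by
    intro j hj
    have h := (hcspec (j+1) hj).2.2 (by omega)
    simpa using h
  have hcmono : ∀ j : ℕ, j ≤ N → c j ≤ c (j+1) :=
    fun j hj => le_trans (hcub j (by omega)) (hclow2 j hj)
  set v : ℕ → ℝ × ℝ := fun j => (c j, ℓ (min j N) (c j)) with hvdef
  have hv1 : ∀ j : ℕ, j ≤ N → v j = (c j, ℓ j (c j)) := by
    intro j hj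
    rw [hvdef]
    simp only [min_eq_left hj]
  have hv2 : ∀ j : ℕ, j ≤ N → v (j+1) = (c (j+1), ℓ j (c (j+1))) := by
    intro j hj
    rcases Nat.lt_or_ge N (j+1) with h | h
    · have hje : j = N := by omega
      rw [hvdef]
      simp only [min_eq_right (by omega : N ≤ j + 1)]
      rw [hje]
    · rw [hv1 (j+1) h, hceq2 j h]
  clear_value v
  have hℓAB : ∀ k u, ℓ k u = (g (t k) - f' (-(t k)) * t k) + f' (-(t k)) * u := by
    intro k u
    rw [hℓdef]
  have hsegsub : ∀ j : ℕ, j ≤ N → ∀ w ∈ segment ℝ (v j) (v (j+1)),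
      ∃ u, c j ≤ u ∧ u ≤ c (j+1) ∧ w = (u, ℓ j u) := by
    intro j hj w hw
    rw [hv1 j hj, hv2 j hj] at hw
    rw [hℓAB j (c j), hℓAB j (c (j+1))] at hw
    obtain ⟨u, h1, h2, h3⟩ := graph_of_seg (hcmono j hj) hw
    exact ⟨u, h1, h2, by rw [h3, hℓAB]⟩
  have hsubseg : ∀ j : ℕ, j ≤ N → ∀ u, c j ≤ u → u ≤ c (j+1) →
      (u, ℓ j u) ∈ segment ℝ (v j) (v (j+1)) := by
    intro j hj u h1 h2
    rw [hv1 j hj, hv2 j hj, hℓAB j (c j), hℓAB j (c (j+1)), hℓAB j u]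
    exact seg_graph_mem h1 h2
  refine ⟨N + 1, v, ?_, ?_, ?_⟩
  · -- neighborhood
    intro w hw
    simp only [Set.mem_iUnion] at hw
    obtain ⟨i, hi, hw⟩ := hw
    have hiN : i ≤ N := by
      have := Finset.mem_range.mp hi
      omega
    obtain ⟨u, hu1, hu2, rfl⟩ := hsegsub i hiN w hw
    refine ⟨(t i, g (t i)), ?_, ?_⟩
    · rw [hγeq, hgdef]
      exact ⟨t i, htmem i hiN, rfl⟩
    · have hsub : (u, ℓ i u) - (t i, g (t i)) = (u - t i, f' (-(t i)) * (u - t i)) := by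
        rw [Prod.mk_sub_mk, hℓAB]
        rw [Prod.mk.injEq]
        exact ⟨rfl, by ring⟩
      rw [hsub]
      have h1 : elen (u - t i, f' (-(t i)) * (u - t i)) ≤ |u - t i| + |f' (-(t i))| * |u - t i| := by
        have := elen_pair_le (u - t i) (f' (-(t i)) * (u - t i))
        rwa [abs_mul] at this
      have h2 : |u - t i| ≤ mesh := by
        rw [abs_le]
        constructor
        · have := hclb i (by omega)
          linarith
        · have := hcub (i+1) (by omega)
          have := htsucc i
          linarith
      have h3 : |f' (-(t i))| ≤ M := hM' _ (hmemk i hiN)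
      have h4 : (1 + M) * mesh < δ := by
        have : 2 * (1 + M) * mesh < δ := lt_of_lt_of_le hmeshs (min_le_right ε δ)
        nlinarith
      calc elen (u - t i, f' (-(t i)) * (u - t i)) ≤ |u - t i| + |f' (-(t i))| * |u - t i| := h1
        _ ≤ mesh + M * mesh := by nlinarith [abs_nonneg (u - t i), abs_nonneg (f' (-(t i)))]
        _ = (1 + M) * mesh := by ring
        _ < δ := h4
  · -- segments: length and tangency
    intro i hi
    have hiN : i ≤ N := by omega
    constructor
    · rw [hv1 i hiN, hv2 i hiN]
      have hsub : ((c (i+1), ℓ i (c (i+1))) : ℝ × ℝ) - (c i, ℓ i (c i))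
          = (c (i+1) - c i, f' (-(t i)) * (c (i+1) - c i)) := by
        rw [Prod.mk_sub_mk, hℓAB i (c (i+1)), hℓAB i (c i)]
        rw [Prod.mk.injEq]
        exact ⟨rfl, by ring⟩
      rw [hsub]
      have h1 : elen (c (i+1) - c i, f' (-(t i)) * (c (i+1) - c i))
          ≤ |c (i+1) - c i| + |f' (-(t i))| * |c (i+1) - c i| := by
        have := elen_pair_le (c (i+1) - c i) (f' (-(t i)) * (c (i+1) - c i))
        rwa [abs_mul] at this
      have h2 : |c (i+1) - c i| ≤ 2 * mesh := by
        rw [abs_le]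
        have ha := hclb i (by omega)
        have hb := hcub (i+1) (by omega)
        have hc' := hcmono i hiN
        have hd' := htsucc i
        constructor <;> linarith
      have h3 : |f' (-(t i))| ≤ M := hM' _ (hmemk i hiN)
      have h4 : 2 * (1 + M) * mesh < ε := lt_of_lt_of_le hmeshs (min_le_left ε δ)
      calc elen (c (i+1) - c i, f' (-(t i)) * (c (i+1) - c i))
          ≤ |c (i+1) - c i| + |f' (-(t i))| * |c (i+1) - c i| := h1
        _ ≤ 2 * mesh + M * (2 * mesh) := by nlinarith [abs_nonneg (c (i+1) - c i), abs_nonneg (f' (-(t i)))]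
        _ = 2 * (1 + M) * mesh := by ring
        _ < ε := h4
    · refine ⟨(t i, g (t i)), ?_, ?_⟩
      · rw [hγeq, hgdef]
        exact ⟨t i, htmem i hiN, rfl⟩
      · intro w hw
        obtain ⟨u, hu1, hu2, rfl⟩ := hsegsub i hiN w hw
        simp only
        rw [hℓAB]
        ring
  · -- covering
    intro α z hz
    obtain ⟨x, ⟨hxγ, hxstrip⟩, rfl⟩ := hz
    rw [hγeq] at hxγ
    obtain ⟨T, hT, rfl⟩ := hxγ
    rw [Set.mem_prod] at hxstrip
    have hTs : T ∈ Set.Icc (α - b) (α - a) := hxstrip.1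
    have hTgoal : ((fun x : ℝ × ℝ => x.2 + f (α - x.1)) ((fun u => (u, -f (-u))) T)) = g T + f (α - T) := by
      rw [hgdef]
    rw [hTgoal]
    -- partition index
    have hTq : T ≤ p + N * mesh := by
      rw [show p + (N:ℝ) * mesh = q from by linarith [hNmesh]]
      exact hT.2
    obtain ⟨j, hjN, hj1, hj2⟩ := exists_partition_index hmesh0 hN1 hT.1 hTq
    have hj1' : t j ≤ T := by rw [htdef]; exact hj1
    have hj2' : T ≤ t (j+1) := by rw [htdef]; push_cast; push_cast at hj2; linarith
    have hpj : p ≤ t j := (htmem j (by omega)).1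
    have hqj : t (j+1) ≤ q := (htmem (j+1) hjN).2
    set κ : ℝ := c (j+1) with hκdef
    set ψ : ℕ → ℝ → ℝ := fun k u => ℓ k u + f (α - u) with hψdef
    set Ψ : ℝ → ℝ := fun u => if u ≤ κ then ψ j u else ψ (j+1) u with hΨdef
    have hΨlow : ∀ u, u ≤ κ → Ψ u = ψ j u := by
      intro u hu; rw [hΨdef]; simp only [if_pos hu]
    have hΨhigh : ∀ u, κ ≤ u → Ψ u = ψ (j+1) u := by
      intro u hu
      rcases le_or_gt u κ with h | h
      · have : u = κ := le_antisymm h hu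
        subst this
        rw [hΨdef]
        simp only [if_pos le_rfl]
        rw [hψdef]
        simp only
        rw [hκdef, hceq2 j hjN]
      · rw [hΨdef]; simp only [if_neg (not_le.mpr h)]
    have hψval : ∀ k, ψ k (t k) = g (t k) + f (α - t k) := by
      intro k; rw [hψdef]; simp only; rw [hℓt]
    have hΨtan : ∀ u, p ≤ u → u ≤ q → ζ * (g u + f (α - u)) ≤ ζ * Ψ u := by
      intro u h1 h2
      rcases le_or_gt u κ with h | h
      · rw [hΨlow u h, hψdef]
        simp only
        have := tangent j (by omega) u h1 h2
        nlinarith [this]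
      · rw [hΨhigh u h.le, hψdef]
        simp only
        have := tangent (j+1) hjN u h1 h2
        nlinarith [this]
    -- the target set
    set RHS : Set ℝ := (fun x : ℝ × ℝ => x.2 + f (α - x.1)) ''
        ((⋃ i ∈ Finset.range (N + 1), segment ℝ (v i) (v (i + 1))) ∩
          Set.Icc (α - b) (α - a) ×ˢ (Set.univ : Set ℝ)) with hRHSdef
    show g T + f (α - T) ∈ RHS
    have mk : ∀ k : ℕ, k ≤ N → ∀ u, c k ≤ u → u ≤ c (k+1) → α - b ≤ u → u ≤ α - a →
        ψ k u = g T + f (α - T) → g T + f (α - T) ∈ RHS := by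
      intro k hk u hc1 hc2 hs1 hs2 hval
      rw [hRHSdef]
      refine ⟨(u, ℓ k u), ⟨?_, ⟨⟨hs1, hs2⟩, trivial⟩⟩, ?_⟩
      · simp only [Set.mem_iUnion]
        exact ⟨k, Finset.mem_range.mpr (by omega), hsubseg k hk u hc1 hc2⟩
      · rw [← hval, hψdef]
    have hψcont : ∀ (k : ℕ) (x y : ℝ), α - b ≤ x → x ≤ y → y ≤ α - a →
        ContinuousOn (ψ k) (Set.uIcc x y) := by
      intro k x y hx hxy hy
      rw [Set.uIcc_of_le hxy, hψdef]
      apply ContinuousOn.add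
      · apply Continuous.continuousOn
        rw [hℓdef]
        fun_prop
      · apply ContinuousOn.comp hfc ((continuous_const.sub continuous_id).continuousOn)
        intro u hu
        exact ⟨by show a ≤ α - u; linarith [hu.2], by show α - u ≤ b; linarith [hu.1]⟩
    have cover : ∀ u₁ u₂ : ℝ, c j ≤ u₁ → u₁ ≤ u₂ → u₂ ≤ c (j+2) → α - b ≤ u₁ → u₂ ≤ α - a →
        (g T + f (α - T)) ∈ Set.uIcc (Ψ u₁) (Ψ u₂) → g T + f (α - T) ∈ RHS := by
      intro u₁ u₂ h1 h12 h2 hs1 hs2 hzm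
      set m : ℝ := max u₁ (min κ u₂) with hmdef
      have hm1 : u₁ ≤ m := le_max_left _ _
      have hm2 : m ≤ u₂ := max_le h12 (min_le_right _ _)
      have hsplit := Set.uIcc_subset_uIcc_union_uIcc (a := Ψ u₁) (b := Ψ m) (c := Ψ u₂) hzm
      rcases hsplit with hz1 | hz2
      · rcases le_or_gt u₁ κ with hκ1 | hκ1
        · have hmκ : m ≤ κ := max_le hκ1 (min_le_left _ _)
          rw [hΨlow u₁ hκ1, hΨlow m hmκ] at hz1
          obtain ⟨u, hu, hval⟩ := intermediate_value_uIcc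
            (hψcont j u₁ m hs1 hm1 (le_trans hm2 hs2)) hz1
          rw [Set.uIcc_of_le hm1] at hu
          exact mk j (by omega) u (le_trans h1 hu.1) (le_trans hu.2 hmκ)
            (le_trans hs1 hu.1) (le_trans hu.2 (le_trans hm2 hs2)) hval
        · have hmu : m = u₁ := by
            rw [hmdef]
            exact max_eq_left (le_trans (min_le_left _ _) hκ1.le)
          rw [hmu, Set.uIcc_self, Set.mem_singleton_iff] at hz1
          rw [hΨhigh u₁ hκ1.le] at hz1
          exact mk (j+1) hjN u₁ hκ1.le (le_trans h12 h2) hs1 (le_trans h12 hs2) hz1.symm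
      · rcases le_or_gt κ u₂ with hκ2 | hκ2
        · have hmκ : κ ≤ m := by
            rw [hmdef]
            exact le_max_of_le_right (le_min le_rfl hκ2)
          rw [hΨhigh m hmκ, hΨhigh u₂ hκ2] at hz2
          obtain ⟨u, hu, hval⟩ := intermediate_value_uIcc
            (hψcont (j+1) m u₂ (le_trans hs1 hm1) hm2 hs2) hz2
          rw [Set.uIcc_of_le hm2] at hu
          exact mk (j+1) hjN u (le_trans hmκ hu.1) (le_trans hu.2 h2)
            (le_trans hs1 (le_trans hm1 hu.1)) (le_trans hu.2 hs2) hval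
        · have hmu : m = u₂ := by
            rw [hmdef, min_eq_right hκ2.le]
            exact max_eq_right h12
          rw [hmu, Set.uIcc_self, Set.mem_singleton_iff] at hz2
          rw [hΨlow u₂ hκ2.le] at hz2
          exact mk j (by omega) u₂ (le_trans h1 h12) hκ2.le (le_trans hs1 h12) hs2 hz2.symm
    -- case split on sign of α
    rcases le_total α 0 with hα | hα
    · -- α ≤ 0 : use uA = t j, uB = min (t (j+1)) (α - a)
      set uB : ℝ := min (t (j+1)) (α - a) with huBdef
      have hq' : uB ≤ q := le_trans (min_le_left _ _) hqj
      have hTu : T ≤ uB := le_min hj2' hTs.2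
      have hbj : α - b ≤ t j := by linarith
      have i1 : ζ * Ψ (t j) ≤ ζ * (g T + f (α - T)) := by
        have e : Ψ (t j) = ψ j (t j) := hΨlow _ (hclow2 j (by omega))
        rw [e, hψval j]
        exact hmonoh α hα (t j) T hpj hT.2 hj1' (by linarith [hTs.2]) (by linarith)
      have i2 : ζ * (g T + f (α - T)) ≤ ζ * Ψ uB := by
        have step1 := hmonoh α hα T uB hT.1 hq' hTu
          (by linarith [min_le_right (t (j+1)) (α - a)]) (by linarith [hTs.1])
        have step2 := hΨtan uB (le_trans hpj (le_trans hj1' hTu)) hq'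
        linarith
      exact cover (t j) uB (hcub j (by omega)) (le_trans hj1' hTu)
        (le_trans (min_le_left _ _) (hclow2 (j+1) hjN)) hbj (min_le_right _ _)
        (mem_uIcc_zeta hζ i1 i2)
    · -- α ≥ 0 : use uA = max (t j) (α - b), uB = t (j+1)
      set uA : ℝ := max (t j) (α - b) with huAdef
      have huAT : uA ≤ T := max_le hj1' hTs.1
      have hp' : p ≤ uA := le_trans hpj (le_max_left _ _)
      have haj : t (j+1) ≤ α - a := by linarith
      have i1 : ζ * (g T + f (α - T)) ≤ ζ * Ψ uA := by
        have step1 := hantih α hα uA T hp' hT.2 huAT (by linarith [hTs.2])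
          (by linarith [le_max_right (t j) (α - b)])
        have step2 := hΨtan uA hp' (le_trans huAT hT.2)
        linarith
      have i2 : ζ * Ψ (t (j+1)) ≤ ζ * (g T + f (α - T)) := by
        have e : Ψ (t (j+1)) = ψ (j+1) (t (j+1)) := hΨhigh _ (hcub (j+1) (by omega))
        rw [e, hψval (j+1)]
        exact hantih α hα T (t (j+1)) hT.1 hqj hj2' (by linarith) (by linarith [hTs.1])
      have hzm : g T + f (α - T) ∈ Set.uIcc (Ψ (t (j+1))) (Ψ uA) := mem_uIcc_zeta hζ i2 i1
      rw [Set.uIcc_comm] at hzm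
      exact cover uA (t (j+1)) (le_trans (hcub j (by omega)) (le_max_left _ _)) (le_trans huAT hj2')
        (hclow2 (j+1) hjN) (le_max_right _ _) haj hzm

theorem stmt11 (a b : ℝ) (hab : a ≤ b) (f f' : ℝ → ℝ)
    (hderiv : ∀ t ∈ Set.Icc a b, HasDerivAt f (f' t) t)
    (hcont : ContinuousOn f' (Set.Icc a b))
    (hmono : StrictMonoOn f' (Set.Icc a b) ∨ StrictAntiOn f' (Set.Icc a b))
    (γ : Set (ℝ × ℝ)) (hγc : IsCompact γ) (hγconn : IsConnected γ)
    (hγsub : γ ⊆ (fun x : ℝ × ℝ => -x) '' ((fun t => (t, f t)) '' Set.Icc a b))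
    (hγnt : γ.Nontrivial)
    (ε δ : ℝ) (hε : 0 < ε) (hδ : 0 < δ) :
    ∃ (n : ℕ) (v : ℕ → ℝ × ℝ),
      (⋃ i ∈ Finset.range n, segment ℝ (v i) (v (i + 1))) ⊆ enbhd δ γ ∧
      (∀ i < n, elen (v (i + 1) - v i) < ε ∧
        ∃ x ∈ γ, ∀ w ∈ segment ℝ (v i) (v (i + 1)),
          w.2 = x.2 + f' (-x.1) * (w.1 - x.1)) ∧
      (∀ α : ℝ,
        (fun x : ℝ × ℝ => x.2 + f (α - x.1)) ''
            (γ ∩ Set.Icc (α - b) (α - a) ×ˢ (Set.univ : Set ℝ)) ⊆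
          (fun x : ℝ × ℝ => x.2 + f (α - x.1)) ''
            ((⋃ i ∈ Finset.range n, segment ℝ (v i) (v (i + 1))) ∩
              Set.Icc (α - b) (α - a) ×ˢ (Set.univ : Set ℝ))) := by
  classical
  obtain ⟨x₀, hx₀, y₀, hy₀, hxy⟩ := hγnt
  have hgr : ∀ x ∈ γ, x.2 = -f (-x.1) ∧ -x.1 ∈ Set.Icc a b := by
    intro x hx
    obtain ⟨y, ⟨s, hs, rfl⟩, rfl⟩ := hγsub hx
    constructor
    · simp
    · simpa using hs
  set S : Set ℝ := Prod.fst '' γ with hSdef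
  have hSc : IsCompact S := hγc.image continuous_fst
  have hSne : S.Nonempty := ⟨x₀.1, ⟨x₀, hx₀, rfl⟩⟩
  have hSconn : IsPreconnected S := (hγconn.image _ continuous_fst.continuousOn).isPreconnected
  set p : ℝ := sInf S with hpdef
  set q : ℝ := sSup S with hqdef
  have hpS : p ∈ S := hSc.sInf_mem hSne
  have hqS : q ∈ S := hSc.sSup_mem hSne
  have hSIcc : S = Set.Icc p q := by
    apply Set.Subset.antisymm
    · intro x hx
      exact ⟨csInf_le hSc.bddBelow hx, le_csSup hSc.bddAbove hx⟩
    · exact hSconn.Icc_subset hpS hqS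
  have hγeq : γ = (fun u => (u, -f (-u))) '' Set.Icc p q := by
    apply Set.Subset.antisymm
    · intro x hx
      refine ⟨x.1, hSIcc ▸ ⟨x, hx, rfl⟩, ?_⟩
      have h := (hgr x hx).1
      exact Prod.ext_iff.mpr ⟨rfl, h.symm⟩
    · rintro _ ⟨u, hu, rfl⟩
      rw [← hSIcc] at hu
      obtain ⟨x, hxγ, rfl⟩ := hu
      have h := (hgr x hxγ).1
      have : ((x.1, -f (-x.1)) : ℝ × ℝ) = x := Prod.ext_iff.mpr ⟨rfl, h.symm⟩
      show ((x.1, -f (-x.1)) : ℝ × ℝ) ∈ γ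
      rw [this]
      exact hxγ
  have hsub' : ∀ x ∈ γ, -b ≤ x.1 ∧ x.1 ≤ -a := by
    intro x hx
    have h := (hgr x hx).2
    exact ⟨by linarith [h.2], by linarith [h.1]⟩
  have hbp : -b ≤ p := by
    obtain ⟨xp, hxpγ, hxp⟩ := hpS
    rw [← hxp]
    exact (hsub' xp hxpγ).1
  have hqa : q ≤ -a := by
    obtain ⟨xq, hxqγ, hxq⟩ := hqS
    rw [← hxq]
    exact (hsub' xq hxqγ).2
  have hpq : p < q := by
    have hne : x₀.1 ≠ y₀.1 := by
      intro h
      apply hxy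
      have h1 := (hgr x₀ hx₀).1
      have h2 := (hgr y₀ hy₀).1
      exact Prod.ext_iff.mpr ⟨h, by rw [h1, h2, h]⟩
    have hx1 : x₀.1 ∈ S := ⟨x₀, hx₀, rfl⟩
    have hy1 : y₀.1 ∈ S := ⟨y₀, hy₀, rfl⟩
    rcases lt_or_gt_of_ne hne with h | h
    · exact lt_of_le_of_lt (csInf_le hSc.bddBelow hx1) (lt_of_lt_of_le h (le_csSup hSc.bddAbove hy1))
    · exact lt_of_le_of_lt (csInf_le hSc.bddBelow hy1) (lt_of_lt_of_le h (le_csSup hSc.bddAbove hx1))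
  rcases hmono with hm | hm
  · refine key_lemma a b f f' hderiv hcont 1 (Or.inl rfl) ?_ p q hpq hbp hqa γ hγeq ε δ hε hδ
    intro x hx y hy hxy'
    simp only [one_mul]
    exact hm.monotoneOn hx hy hxy'
  · refine key_lemma a b f f' hderiv hcont (-1) (Or.inr rfl) ?_ p q hpq hbp hqa γ hγeq ε δ hε hδ
    intro x hx y hy hxy'
    simp only [neg_one_mul, neg_le_neg_iff]
    exact hm.antitoneOn hx hy hxy'
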